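/- The map g is well-defined: every lattice path x ∈ L_{2k,k} \ D_{2k}^k has at least d_0(x)+1 D-steps touching the line y=0. Similarly, h' is well-defined: every lattice path x ∈ L_{2k,k+1} has at least u_1(x)+1 U-steps touching the line y=1. -/

import Mathlib

/-- Value of a step: `true` = U-step (+1), `false` = D-step (-1). -/
def stepVal (b : Bool) : ℤ := if b then 1 else -1

/-- Height of the lattice path `x` after its first `i` steps. -/
def pathHeight (x : List Bool) (i : ℕ) : ℤ := ((x.take i).map stepVal).sum

/-- The step at position `i` (0-indexed) is a U-step. -/
def isU (x : List Bool) (i : ℕ) : Bool := x.getD i true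

/-- The step at position `i` (0-indexed) is a D-step. -/
def isD (x : List Bool) (i : ℕ) : Bool := !(x.getD i true)

/-- Number of flaws: D-steps lying below the line y=0 (i.e. starting at height ≤ 0). -/
def flaws (x : List Bool) : ℕ :=
  ((List.range x.length).filter (fun i => isD x i && decide (pathHeight x i ≤ 0))).length

/-- `DyckSet k e` = the set `D_{2k}^e` of Dyck paths with `2k` steps and `e` flaws. -/
def DyckSet (k e : ℕ) : Set (List Bool) :=
  {x | x.length = 2*k ∧ x.count true = k ∧ flaws x = e}

/-- `LSet k m` = the set `L_{2k,m}` of lattice paths with `2k` steps and `m` U-steps. -/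
def LSet (k m : ℕ) : Set (List Bool) :=
  {x | x.length = 2*k ∧ x.count true = m}

/-- `d_c(x)`: number of D-steps of `x` starting on the line `y = c`. -/
def dstart (x : List Bool) (c : ℤ) : ℕ :=
  ((List.range x.length).filter (fun i => isD x i && decide (pathHeight x i = c))).length

/-- `u_c(x)`: number of U-steps of `x` starting on the line `y = c`. -/
def ustart (x : List Bool) (c : ℤ) : ℕ :=
  ((List.range x.length).filter (fun i => isU x i && decide (pathHeight x i = c))).length

/-- Positions (in increasing order) of D-steps of `x` touching the line `y = c`
(a D-step at position `i` goes from height `pathHeight x i` down to `pathHeight x i - 1`,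
so it touches `y = c` iff its start height is `c` or `c+1`). -/
def dtouch (x : List Bool) (c : ℤ) : List ℕ :=
  (List.range x.length).filter
    (fun i => isD x i && (decide (pathHeight x i = c) || decide (pathHeight x i = c+1)))

/-- Positions (in increasing order) of U-steps of `x` touching the line `y = c`
(a U-step at position `i` goes from height `pathHeight x i` up to `pathHeight x i + 1`,
so it touches `y = c` iff its start height is `c` or `c-1`). -/
def utouch (x : List Bool) (c : ℤ) : List ℕ :=
  (List.range x.length).filter
    (fun i => isU x i && (decide (pathHeight x i = c) || decide (pathHeight x i = c-1)))

/-- Position (0-indexed) flipped by `g`: the `(d_0(x)+1)`-th D-step touching `y=0`. -/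
def gIdx (x : List Bool) : ℕ := (dtouch x 0).getD (dstart x 0) 0

/-- The map `g`: flip the `(d_0(x)+1)`-th D-step of `x` touching the line `y=0`. -/
def gMap (x : List Bool) : List Bool := x.set (gIdx x) true

/-- Position (0-indexed) flipped by `h`: the `u_1(x)`-th U-step touching `y=1`. -/
def hIdx (x : List Bool) : ℕ := (utouch x 1).getD (ustart x 1 - 1) 0

/-- The map `h`: flip the `u_1(x)`-th U-step of `x` touching the line `y=1`. -/
def hMap (x : List Bool) : List Bool := x.set (hIdx x) false

/-- Position (0-indexed) flipped by `g'`: the `d_0(x)`-th D-step touching `y=0`. -/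
def g'Idx (x : List Bool) : ℕ := (dtouch x 0).getD (dstart x 0 - 1) 0

/-- The map `g'`: flip the `d_0(x)`-th D-step of `x` touching the line `y=0`. -/
def g'Map (x : List Bool) : List Bool := x.set (g'Idx x) true

/-- Position (0-indexed) flipped by `h'`: the `(u_1(x)+1)`-th U-step touching `y=1`. -/
def h'Idx (x : List Bool) : ℕ := (utouch x 1).getD (ustart x 1) 0

/-- The map `h'`: flip the `(u_1(x)+1)`-th U-step of `x` touching the line `y=1`. -/
def h'Map (x : List Bool) : List Bool := x.set (h'Idx x) false

/-- The minimum-change map `f := h ∘ g`. -/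
def fMap (x : List Bool) : List Bool := hMap (gMap x)

/-- `piSeq n x`: the sequence of (1-indexed) positions flipped by the successive
applications `g, h, g, h, ...` over `n` applications of `f` starting from `x`. -/
def piSeq : ℕ → List Bool → List ℕ
  | 0, _ => []
  | n+1, x => (gIdx x + 1) :: (hIdx (gMap x) + 1) :: piSeq n (fMap x)

/-- Reverse the step sequence and complement every step. -/
def revComp (x : List Bool) : List Bool := x.reverse.map (fun b => !b)



lemma height_succ (x : List Bool) (i : ℕ) (h : i < x.length) :
    pathHeight x (i+1) = pathHeight x i + stepVal (x.getD i true) := by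
  unfold pathHeight
  rw [List.map_take, List.map_take, List.sum_take_succ _ i (by simp [h])]
  simp [List.getD_eq_getElem?_getD, List.getElem?_eq_getElem h]

lemma height_zero (x : List Bool) : pathHeight x 0 = 0 := rfl

lemma sum_stepVal (x : List Bool) :
    (x.map stepVal).sum = (x.count true : ℤ) - (x.count false : ℤ) := by
  induction x with
  | nil => simp
  | cons a t ih =>
    cases a <;> simp [stepVal, List.count_cons, ih] <;> push_cast <;> ring

lemma count_add (x : List Bool) : x.count true + x.count false = x.length := by
  induction x with
  | nil => simp
  | cons a t ih => cases a <;> simp [List.count_cons] <;> omega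

lemma height_final (x : List Bool) :
    pathHeight x x.length = (x.count true : ℤ) - (x.count false : ℤ) := by
  unfold pathHeight
  rw [List.take_length]
  exact sum_stepVal x

lemma map_range_getD (x : List Bool) :
    (List.range x.length).map (fun i => x.getD i true) = x := by
  apply List.ext_getElem
  · simp
  · intro i h1 h2
    simp [List.getD_eq_getElem?_getD, List.getElem?_eq_getElem h2]

lemma filter_or_len (p q : ℕ → Bool) (l : List ℕ)
    (hpq : ∀ i, ¬(p i = true ∧ q i = true)) :
    (l.filter (fun i => p i || q i)).length = (l.filter p).length + (l.filter q).length := by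
  induction l with
  | nil => simp
  | cons a t ih =>
    cases hp : p a <;> cases hq : q a <;>
      simp [List.filter_cons, hp, hq, ih] <;>
      first | omega | exact absurd ⟨hp, hq⟩ (hpq a)

lemma dtouch_len (x : List Bool) :
    (dtouch x 0).length = dstart x 0 + dstart x 1 := by
  unfold dtouch dstart
  have : (fun i => isD x i && (decide (pathHeight x i = 0) || decide (pathHeight x i = 0+1)))
      = fun i => (isD x i && decide (pathHeight x i = 0)) ||
          (isD x i && decide (pathHeight x i = 1)) := by
    funext i
    norm_num [Bool.and_or_distrib_left]
  rw [this]
  apply filter_or_len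
  intro i hi
  simp only [Bool.and_eq_true, decide_eq_true_eq] at hi
  omega

lemma utouch_len (x : List Bool) :
    (utouch x 1).length = ustart x 1 + ustart x 0 := by
  unfold utouch ustart
  have : (fun i => isU x i && (decide (pathHeight x i = 1) || decide (pathHeight x i = 1-1)))
      = fun i => (isU x i && decide (pathHeight x i = 1)) ||
          (isU x i && decide (pathHeight x i = 0)) := by
    funext i
    norm_num [Bool.and_or_distrib_left]
  rw [this]
  apply filter_or_len
  intro i hi
  simp only [Bool.and_eq_true, decide_eq_true_eq] at hi
  omega

lemma filter_isD_len (x : List Bool) :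
    ((List.range x.length).filter (fun i => isD x i)).length = x.count false := by
  have hpred : (fun i => isD x i) = fun i => ((fun b => b == false) (x.getD i true)) := by
    funext i
    unfold isD
    cases x.getD i true <;> rfl
  rw [hpred, ← List.countP_eq_length_filter,
    show (fun i => (fun b => b == false) (x.getD i true))
      = ((fun b => b == false) ∘ (fun i => x.getD i true)) from rfl,
    ← List.countP_map, map_range_getD]
  simp [List.count]

lemma exists_down (x : List Bool) :
    ∀ b, b ≤ x.length → pathHeight x b ≤ 0 →
    ∀ a ≤ b, 1 ≤ pathHeight x a →
    ∃ j, j < x.length ∧ isD x j = true ∧ pathHeight x j = 1 := by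
  intro b
  induction b with
  | zero =>
    intro _ hb a ha hha
    interval_cases a
    rw [height_zero] at hha
    omega
  | succ b ih =>
    intro hble hb a ha hha
    by_cases hc : pathHeight x b ≤ 0
    · have hab : a ≤ b := by
        rcases Nat.lt_succ_iff_lt_or_eq.mp (Nat.lt_succ_of_le ha) with h | h
        · omega
        · exfalso; rw [h] at hha; omega
      exact ih (by omega) hc a hab hha
    · push_neg at hc
      have hlt : b < x.length := hble
      have hs := height_succ x b hlt
      cases hg : x.getD b true
      · refine ⟨b, hlt, by unfold isD; rw [hg]; rfl, ?_⟩
        rw [hg] at hs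
        simp only [stepVal, Bool.false_eq_true, if_false] at hs
        omega
      · exfalso
        rw [hg] at hs
        simp only [stepVal, if_true] at hs
        omega

lemma exists_up (x : List Bool) :
    ∀ b, b ≤ x.length → 1 ≤ pathHeight x b →
    ∃ j, j < x.length ∧ isU x j = true ∧ pathHeight x j = 0 := by
  intro b
  induction b with
  | zero =>
    intro _ hb
    rw [height_zero] at hb
    omega
  | succ b ih =>
    intro hble hb
    by_cases hc : 1 ≤ pathHeight x b
    · exact ih (by omega) hc
    · push_neg at hc
      have hlt : b < x.length := hble
      have hs := height_succ x b hlt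
      cases hg : x.getD b true
      · exfalso
        rw [hg] at hs
        simp only [stepVal, Bool.false_eq_true, if_false] at hs
        omega
      · refine ⟨b, hlt, by unfold isU; rw [hg], ?_⟩
        rw [hg] at hs
        simp only [stepVal, if_true] at hs
        omega

theorem g_h'_well_defined (k : ℕ) :
    (∀ x ∈ LSet k k \ DyckSet k k, dstart x 0 + 1 ≤ (dtouch x 0).length) ∧
    (∀ x ∈ LSet k (k+1), ustart x 1 + 1 ≤ (utouch x 1).length) := by
  constructor
  · rintro x ⟨⟨hlen, hcnt⟩, hnd⟩
    have hfl : flaws x ≠ k := fun h => hnd ⟨hlen, hcnt, h⟩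
    have hcf : x.count false = k := by have := count_add x; omega
    have hex : ∃ i, i < x.length ∧ isD x i = true ∧ 1 ≤ pathHeight x i := by
      by_contra h
      push_neg at h
      apply hfl
      unfold flaws
      rw [List.filter_congr (l := List.range x.length)
        (q := fun i => isD x i) ?_, filter_isD_len, hcf]
      intro i hi
      rw [List.mem_range] at hi
      cases hd : isD x i
      · simp [hd]
      · have h2 : pathHeight x i ≤ 0 := by have := h i hi hd; omega
        simp [hd, h2]
    obtain ⟨i0, hi0, hdi0, hh1⟩ := hex
    have hfin : pathHeight x x.length ≤ 0 := by
      rw [height_final, hcnt, hcf]; omega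
    obtain ⟨j, hj, hdj, hhj⟩ := exists_down x x.length le_rfl hfin i0 (le_of_lt hi0) hh1
    have hmem : j ∈ (List.range x.length).filter
        (fun i => isD x i && decide (pathHeight x i = (1 : ℤ))) := by
      rw [List.mem_filter, List.mem_range]
      exact ⟨hj, by simp [hdj, hhj]⟩
    have h1 : 1 ≤ dstart x 1 := by
      unfold dstart
      exact List.length_pos_iff.mpr (List.ne_nil_of_mem hmem)
    rw [dtouch_len]
    omega
  · rintro x ⟨hlen, hcnt⟩
    have hk : k + 1 ≤ 2 * k := by
      have : x.count true ≤ x.length := List.count_le_length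
      omega
    have hcf : x.count false = k - 1 := by have := count_add x; omega
    have hfin : 1 ≤ pathHeight x x.length := by
      rw [height_final, hcnt, hcf]
      have : (1 : ℕ) ≤ k := by omega
      rw [Nat.cast_sub this]
      push_cast
      omega
    obtain ⟨j, hj, huj, hhj⟩ := exists_up x x.length le_rfl hfin
    have hmem : j ∈ (List.range x.length).filter
        (fun i => isU x i && decide (pathHeight x i = (0 : ℤ))) := by
      rw [List.mem_filter, List.mem_range]
      exact ⟨hj, by simp [huj, hhj]⟩
    have h1 : 1 ≤ ustart x 0 := by
      unfold ustart
      exact List.length_pos_iff.mpr (List.ne_nil_of_mem hmem)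
    rw [utouch_len]
    omega
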